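/- In the setting of the weighted homogeneous pair (f,g), let h(z) = γ_1 z_1^{p(m−n)} + γ_2 z_2^{q(m−n)} with γ_1, γ_2 ∈ ℂ∖{0}, let ℓ(z) = c_1 z_1 + c_2 z_2 with c_1, c_2 ∈ ℂ∖{0}, let t, s > 0 and F_{t,s} = fḡ + t·h + s·ℓ. If all Wirtinger derivatives of F_{t,s} vanish at a point w = (w_1,w_2) ∈ ℂ², then f(w)·conj(g(w)) = 0 and t·pq(m−n)·h(w) + s·(q·c_1·w_1 + p·c_2·w_2) = 0. In particular, if the zero sets {z : f(z)·g(z) = 0} and {z : t·pq(m−n)·h(z) + s·(q c_1 z_1 + p c_2 z_2) = 0} intersect in only finitely many points, then S_2(F_{t,s}) is a finite set. -/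

import Mathlib

open Complex

noncomputable section

/-- The Wirtinger derivative `∂P/∂z_j` at `w`, defined via the real Fréchet derivative:
`∂P/∂z_j = (1/2)(∂P/∂x_j − i ∂P/∂y_j)`. -/
def wD {n : ℕ} (P : (Fin n → ℂ) → ℂ) (j : Fin n) (w : Fin n → ℂ) : ℂ :=
  (1 / 2 : ℂ) *
    (fderiv ℝ P w (Pi.single j 1) - Complex.I * fderiv ℝ P w (Pi.single j Complex.I))

/-- The Wirtinger derivative `∂P/∂z̄_j` at `w`:
`∂P/∂z̄_j = (1/2)(∂P/∂x_j + i ∂P/∂y_j)`. -/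
def wDbar {n : ℕ} (P : (Fin n → ℂ) → ℂ) (j : Fin n) (w : Fin n → ℂ) : ℂ :=
  (1 / 2 : ℂ) *
    (fderiv ℝ P w (Pi.single j 1) + Complex.I * fderiv ℝ P w (Pi.single j Complex.I))

/-- `P : ℂⁿ → ℂ` is a mixed polynomial: a finite sum `Σ c_{ν,μ} z^ν (conj z)^μ`. -/
def IsMixedPoly {n : ℕ} (P : (Fin n → ℂ) → ℂ) : Prop :=
  ∃ c : ((Fin n → ℕ) × (Fin n → ℕ)) →₀ ℂ, ∀ z : Fin n → ℂ,
    P z = c.sum fun νμ a =>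
      a * (∏ j, z j ^ νμ.1 j) * ∏ j, (starRingEnd ℂ) (z j) ^ νμ.2 j

/-- `w` is a singularity of `P` : the gradients (real differentials) of `Re P` and `Im P`
are linearly dependent at `w`. -/
def IsSingularity {n : ℕ} (P : (Fin n → ℂ) → ℂ) (w : Fin n → ℂ) : Prop :=
  ∃ a b : ℝ, ¬(a = 0 ∧ b = 0) ∧
    a • fderiv ℝ (fun z => (P z).re) w + b • fderiv ℝ (fun z => (P z).im) w = 0





lemma mvpoly_diff (f : MvPolynomial (Fin 2) ℂ) :
    Differentiable ℂ (fun z : Fin 2 → ℂ => MvPolynomial.eval z f) := by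
  induction f using MvPolynomial.induction_on with
  | C a => simpa using differentiable_const a
  | add p q hp hq => simp only [map_add]; exact hp.add hq
  | mul_X p i hp =>
      simp only [map_mul, MvPolynomial.eval_X]
      exact hp.mul ((ContinuousLinearMap.proj i : (Fin 2 → ℂ) →L[ℂ] ℂ).differentiable)

lemma vec_decomp (a b : ℂ) :
    (![a, b] : Fin 2 → ℂ) = a • (Pi.single 0 1 : Fin 2 → ℂ) + b • (Pi.single 1 1 : Fin 2 → ℂ) := by
  funext j
  fin_cases j <;> simp

lemma euler (p q d : ℕ) (P : (Fin 2 → ℂ) → ℂ) (hP : Differentiable ℂ P)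
    (hhom : ∀ c : ℂ, c ≠ 0 → ∀ z : Fin 2 → ℂ,
      P ![c ^ q * z 0, c ^ p * z 1] = c ^ d * P z)
    (w : Fin 2 → ℂ) :
    (q : ℂ) * w 0 * fderiv ℂ P w (Pi.single 0 1) +
      (p : ℂ) * w 1 * fderiv ℂ P w (Pi.single 1 1) = (d : ℂ) * P w := by
  set ψ : ℂ → (Fin 2 → ℂ) := fun c => ![c ^ q * w 0, c ^ p * w 1] with hψ
  have hψ1 : ψ 1 = w := by funext j; fin_cases j <;> simp [hψ]
  have hψd : HasDerivAt ψ ![(q:ℂ) * w 0, (p:ℂ) * w 1] 1 := by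
    rw [hasDerivAt_pi]
    intro j
    fin_cases j
    · simpa [hψ] using (hasDerivAt_pow q (1:ℂ)).mul_const (w 0)
    · simpa [hψ] using (hasDerivAt_pow p (1:ℂ)).mul_const (w 1)
  have hcomp : HasDerivAt (fun c => P (ψ c)) (fderiv ℂ P w ![(q:ℂ) * w 0, (p:ℂ) * w 1]) 1 := by
    have hPf : HasFDerivAt P (fderiv ℂ P w) (ψ 1) := by
      rw [hψ1]; exact (hP w).hasFDerivAt
    exact hPf.comp_hasDerivAt 1 hψd
  have hre : HasDerivAt (fun c : ℂ => P (ψ c)) ((d : ℂ) * P w) 1 := by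
    have h1 : HasDerivAt (fun c : ℂ => c ^ d * P w) ((d:ℂ) * P w) 1 := by
      simpa using (hasDerivAt_pow d (1:ℂ)).mul_const (P w)
    apply h1.congr_of_eventuallyEq
    filter_upwards [eventually_ne_nhds (one_ne_zero (α := ℂ))] with c hc
    exact hhom c hc w
  have huniq := hcomp.unique hre
  rw [vec_decomp, map_add, map_smul, map_smul, smul_eq_mul, smul_eq_mul] at huniq
  linear_combination huniq

lemma restrict_single_I (G : (Fin 2 → ℂ) →L[ℂ] ℂ) (j : Fin 2) :
    (G.restrictScalars ℝ) (Pi.single j I) = I * G (Pi.single j 1) := by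
  have hs : (Pi.single j I : Fin 2 → ℂ) = I • (Pi.single j 1 : Fin 2 → ℂ) := by
    rw [← Pi.single_smul, smul_eq_mul, mul_one]
  rw [ContinuousLinearMap.coe_restrictScalars', hs, map_smul, smul_eq_mul]

lemma restrict_single_one (G : (Fin 2 → ℂ) →L[ℂ] ℂ) (j : Fin 2) :
    (G.restrictScalars ℝ) (Pi.single j 1) = G (Pi.single j 1) := rfl

lemma csingle_I (G : (Fin 2 → ℂ) →L[ℂ] ℂ) (j : Fin 2) :
    G (Pi.single j I) = I * G (Pi.single j 1) := by
  have hs : (Pi.single j I : Fin 2 → ℂ) = I • (Pi.single j 1 : Fin 2 → ℂ) := by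
    rw [← Pi.single_smul, smul_eq_mul, mul_one]
  rw [hs, map_smul, smul_eq_mul]

-- main structural lemma: Wirtinger derivatives of A z * conj (B z) + t h z + s l z
lemma wirt_eval (A B H L : (Fin 2 → ℂ) → ℂ)
    (hA : Differentiable ℂ A) (hB : Differentiable ℂ B)
    (hH : Differentiable ℂ H) (hL : Differentiable ℂ L)
    (t s : ℂ) (F : (Fin 2 → ℂ) → ℂ)
    (hF : F = fun z => A z * (starRingEnd ℂ) (B z) + t * H z + s * L z)
    (w : Fin 2 → ℂ) (j : Fin 2) :
    wD F j w = fderiv ℂ A w (Pi.single j 1) * (starRingEnd ℂ) (B w)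
      + t * fderiv ℂ H w (Pi.single j 1) + s * fderiv ℂ L w (Pi.single j 1) ∧
    wDbar F j w = A w * (starRingEnd ℂ) (fderiv ℂ B w (Pi.single j 1)) := by
  set DA := fderiv ℂ A w
  set DB := fderiv ℂ B w
  set DH := fderiv ℂ H w
  set DL := fderiv ℂ L w
  have hAr : HasFDerivAt A (DA.restrictScalars ℝ) w := ((hA w).hasFDerivAt).restrictScalars ℝ
  have hBr : HasFDerivAt B (DB.restrictScalars ℝ) w := ((hB w).hasFDerivAt).restrictScalars ℝ
  have hHr : HasFDerivAt H (DH.restrictScalars ℝ) w := ((hH w).hasFDerivAt).restrictScalars ℝ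
  have hLr : HasFDerivAt L (DL.restrictScalars ℝ) w := ((hL w).hasFDerivAt).restrictScalars ℝ
  have hBc : HasFDerivAt (fun z => (starRingEnd ℂ) (B z))
      ((Complex.conjCLE : ℂ ≃L[ℝ] ℂ).toContinuousLinearMap.comp (DB.restrictScalars ℝ)) w := by
    exact (Complex.conjCLE.hasFDerivAt).comp w hBr
  have hprod := hAr.mul hBc
  have hFd : HasFDerivAt F
      ((A w • ((Complex.conjCLE : ℂ ≃L[ℝ] ℂ).toContinuousLinearMap.comp (DB.restrictScalars ℝ))
        + (starRingEnd ℂ) (B w) • (DA.restrictScalars ℝ))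
        + t • (DH.restrictScalars ℝ) + s • (DL.restrictScalars ℝ)) w := by
    rw [hF]
    exact (hprod.add (hHr.const_mul t)).add (hLr.const_mul s)
  have e1 : fderiv ℝ F w (Pi.single j 1)
      = A w * (starRingEnd ℂ) (DB (Pi.single j 1)) + (starRingEnd ℂ) (B w) * DA (Pi.single j 1)
        + t * DH (Pi.single j 1) + s * DL (Pi.single j 1) := by
    rw [hFd.fderiv]
    simp [ContinuousLinearMap.add_apply, ContinuousLinearMap.smul_apply,
      restrict_single_one, smul_eq_mul]
  have e2 : fderiv ℝ F w (Pi.single j I)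
      = A w * (starRingEnd ℂ) (I * DB (Pi.single j 1))
        + (starRingEnd ℂ) (B w) * (I * DA (Pi.single j 1))
        + t * (I * DH (Pi.single j 1)) + s * (I * DL (Pi.single j 1)) := by
    rw [hFd.fderiv]
    simp [ContinuousLinearMap.add_apply, ContinuousLinearMap.smul_apply,
      restrict_single_I, csingle_I, smul_eq_mul]
  constructor
  · rw [wD, e1, e2]
    simp only [map_mul, Complex.conj_I]
    have hI : (I:ℂ) * I = -1 := Complex.I_mul_I
    linear_combination ((1/2 : ℂ) * (A w * (starRingEnd ℂ) (DB (Pi.single j 1))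
      - (starRingEnd ℂ) (B w) * DA (Pi.single j 1)
      - t * DH (Pi.single j 1) - s * DL (Pi.single j 1))) * hI
  · rw [wDbar, e1, e2]
    simp only [map_mul, Complex.conj_I]
    have hI : (I:ℂ) * I = -1 := Complex.I_mul_I
    linear_combination ((1/2 : ℂ) * ((starRingEnd ℂ) (B w) * DA (Pi.single j 1)
      + t * DH (Pi.single j 1) + s * DL (Pi.single j 1)
      - A w * (starRingEnd ℂ) (DB (Pi.single j 1)))) * hI


/-- For `F_{t,s} = fḡ + t·h + s·ℓ`: at any point where all Wirtinger derivatives of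
`F_{t,s}` vanish, `f·conj(g)` vanishes and `t·pq(m−n)·h + s·(qc₁z₁ + pc₂z₂)` vanishes;
hence if the two corresponding zero sets meet in finitely many points, `S₂(F_{t,s})`
is finite. -/
theorem stmt_17 (p q m n : ℕ) (hp : 0 < p) (hq : 0 < q) (hm : 0 < m) (hn : 0 < n)
    (hmn : n < m) (hpq : p ≤ q)
    (f g : MvPolynomial (Fin 2) ℂ)
    (hf : ∀ c : ℂ, c ≠ 0 → ∀ z : Fin 2 → ℂ,
      MvPolynomial.eval ![c ^ q * z 0, c ^ p * z 1] f =
        c ^ (p * q * m) * MvPolynomial.eval z f)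
    (hg : ∀ c : ℂ, c ≠ 0 → ∀ z : Fin 2 → ℂ,
      MvPolynomial.eval ![c ^ q * z 0, c ^ p * z 1] g =
        c ^ (p * q * n) * MvPolynomial.eval z g)
    (γ₁ γ₂ : ℂ) (hγ₁ : γ₁ ≠ 0) (hγ₂ : γ₂ ≠ 0)
    (h : (Fin 2 → ℂ) → ℂ)
    (hh : h = fun z => γ₁ * z 0 ^ (p * (m - n)) + γ₂ * z 1 ^ (q * (m - n)))
    (c₁ c₂ : ℂ) (hc₁ : c₁ ≠ 0) (hc₂ : c₂ ≠ 0)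
    (l : (Fin 2 → ℂ) → ℂ) (hl : l = fun z => c₁ * z 0 + c₂ * z 1)
    (t s : ℝ) (ht : 0 < t) (hs : 0 < s)
    (F : (Fin 2 → ℂ) → ℂ)
    (hF : F = fun z =>
      MvPolynomial.eval z f * (starRingEnd ℂ) (MvPolynomial.eval z g) +
        (t : ℂ) * h z + (s : ℂ) * l z) :
    (∀ w : Fin 2 → ℂ, (∀ j : Fin 2, wD F j w = 0 ∧ wDbar F j w = 0) →
      MvPolynomial.eval w f * (starRingEnd ℂ) (MvPolynomial.eval w g) = 0 ∧
      (t : ℂ) * ((p * q * (m - n) : ℕ) : ℂ) * h w +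
        (s : ℂ) * ((q : ℂ) * c₁ * w 0 + (p : ℂ) * c₂ * w 1) = 0) ∧
    (({z : Fin 2 → ℂ | MvPolynomial.eval z f * MvPolynomial.eval z g = 0} ∩
        {z : Fin 2 → ℂ | (t : ℂ) * ((p * q * (m - n) : ℕ) : ℂ) * h z +
          (s : ℂ) * ((q : ℂ) * c₁ * z 0 + (p : ℂ) * c₂ * z 1) = 0}).Finite →
      {w : Fin 2 → ℂ | ∀ j : Fin 2, wD F j w = 0 ∧ wDbar F j w = 0}.Finite) := by
  have dA : Differentiable ℂ (fun z : Fin 2 → ℂ => MvPolynomial.eval z f) := mvpoly_diff f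
  have dB : Differentiable ℂ (fun z : Fin 2 → ℂ => MvPolynomial.eval z g) := mvpoly_diff g
  have dH : Differentiable ℂ h := by
    rw [hh]
    exact ((((ContinuousLinearMap.proj (0 : Fin 2) :
        (Fin 2 → ℂ) →L[ℂ] ℂ).differentiable).pow _).const_mul γ₁).add
      ((((ContinuousLinearMap.proj (1 : Fin 2) :
        (Fin 2 → ℂ) →L[ℂ] ℂ).differentiable).pow _).const_mul γ₂)
  have dL : Differentiable ℂ l := by
    rw [hl]
    exact (((ContinuousLinearMap.proj (0 : Fin 2) :
        (Fin 2 → ℂ) →L[ℂ] ℂ).differentiable).const_mul c₁).add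
      (((ContinuousLinearMap.proj (1 : Fin 2) :
        (Fin 2 → ℂ) →L[ℂ] ℂ).differentiable).const_mul c₂)
  have hhomH : ∀ c : ℂ, c ≠ 0 → ∀ z : Fin 2 → ℂ,
      h ![c ^ q * z 0, c ^ p * z 1] = c ^ (p * q * (m - n)) * h z := by
    intro c hc z
    rw [hh]
    simp only [Matrix.cons_val_zero, Matrix.cons_val_one, Matrix.head_cons]
    have e1 : q * (p * (m - n)) = p * q * (m - n) := by ring
    have e2 : p * (q * (m - n)) = p * q * (m - n) := by ring
    rw [mul_pow, mul_pow, ← pow_mul, ← pow_mul, e1, e2]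
    ring
  have key : ∀ w : Fin 2 → ℂ, (∀ j : Fin 2, wD F j w = 0 ∧ wDbar F j w = 0) →
      MvPolynomial.eval w f * (starRingEnd ℂ) (MvPolynomial.eval w g) = 0 ∧
      (t : ℂ) * ((p * q * (m - n) : ℕ) : ℂ) * h w +
        (s : ℂ) * ((q : ℂ) * c₁ * w 0 + (p : ℂ) * c₂ * w 1) = 0 := by
    intro w hw
    obtain ⟨hw0, hw0'⟩ := hw 0
    obtain ⟨hw1, hw1'⟩ := hw 1
    have hLd : HasFDerivAt l (c₁ • (ContinuousLinearMap.proj (0 : Fin 2) :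
        (Fin 2 → ℂ) →L[ℂ] ℂ) + c₂ • (ContinuousLinearMap.proj (1 : Fin 2) :
        (Fin 2 → ℂ) →L[ℂ] ℂ)) w := by
      rw [hl]
      exact (((ContinuousLinearMap.proj (0 : Fin 2) : (Fin 2 → ℂ) →L[ℂ] ℂ).hasFDerivAt).const_mul
        c₁).add (((ContinuousLinearMap.proj (1 : Fin 2) :
          (Fin 2 → ℂ) →L[ℂ] ℂ).hasFDerivAt).const_mul c₂)
    have hl0 : fderiv ℂ l w (Pi.single 0 1) = c₁ := by
      rw [hLd.fderiv]
      simp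
    have hl1 : fderiv ℂ l w (Pi.single 1 1) = c₂ := by
      rw [hLd.fderiv]
      simp
    have W0 := wirt_eval (fun z => MvPolynomial.eval z f) (fun z => MvPolynomial.eval z g)
      h l dA dB dH dL (t : ℂ) (s : ℂ) F hF w 0
    have W1 := wirt_eval (fun z => MvPolynomial.eval z f) (fun z => MvPolynomial.eval z g)
      h l dA dB dH dL (t : ℂ) (s : ℂ) F hF w 1
    have eulerA := euler p q (p * q * m) (fun z => MvPolynomial.eval z f) dA hf w
    have eulerB := euler p q (p * q * n) (fun z => MvPolynomial.eval z g) dB hg w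
    have eulerH := euler p q (p * q * (m - n)) h dH hhomH w
    rw [W0.1, hl0] at hw0
    rw [W1.1, hl1] at hw1
    rw [W0.2] at hw0'
    rw [W1.2] at hw1'
    have r0' : (starRingEnd ℂ) (MvPolynomial.eval w f) *
        fderiv ℂ (fun z => MvPolynomial.eval z g) w (Pi.single 0 1) = 0 := by
      have := congrArg (starRingEnd ℂ) hw0'
      simpa [mul_comm] using this
    have r1' : (starRingEnd ℂ) (MvPolynomial.eval w f) *
        fderiv ℂ (fun z => MvPolynomial.eval z g) w (Pi.single 1 1) = 0 := by
      have := congrArg (starRingEnd ℂ) hw1'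
      simpa [mul_comm] using this
    have hne : ((p * q * n : ℕ) : ℂ) ≠ 0 := by
      simp only [ne_eq, Nat.cast_eq_zero]
      positivity
    have hABc : (starRingEnd ℂ) (MvPolynomial.eval w f) * MvPolynomial.eval w g = 0 := by
      have hz : ((p * q * n : ℕ) : ℂ) *
          ((starRingEnd ℂ) (MvPolynomial.eval w f) * MvPolynomial.eval w g) = 0 := by
        linear_combination ((q : ℂ) * w 0) * r0' + ((p : ℂ) * w 1) * r1' -
          (starRingEnd ℂ) (MvPolynomial.eval w f) * eulerB
      rcases mul_eq_zero.mp hz with hc | hc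
      · exact absurd hc hne
      · exact hc
    have goal1 : MvPolynomial.eval w f * (starRingEnd ℂ) (MvPolynomial.eval w g) = 0 := by
      have := congrArg (starRingEnd ℂ) hABc
      simpa [mul_comm] using this
    refine ⟨goal1, ?_⟩
    linear_combination ((q : ℂ) * w 0) * hw0 + ((p : ℂ) * w 1) * hw1 -
      (starRingEnd ℂ) (MvPolynomial.eval w g) * eulerA - (t : ℂ) * eulerH -
      ((p * q * m : ℕ) : ℂ) * goal1
  refine ⟨key, ?_⟩
  intro hfin
  apply hfin.subset
  intro w hw
  obtain ⟨h1, h2⟩ := key w hw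
  constructor
  · rcases mul_eq_zero.mp h1 with hzf | hzg
    · exact mul_eq_zero_of_left hzf _
    · exact mul_eq_zero_of_right _ (by simpa using hzg)
  · exact h2

end
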